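/- A real topological vector space admits a nonzero continuous linear functional if and only if it contains a nonempty proper open convex subset. -/

import Mathlib

/-- A real topological vector space admits a nonzero continuous linear functional iff
it contains a nonempty proper open convex subset. -/
theorem exists_nonzero_continuous_functional_iff
    {E : Type*} [AddCommGroup E] [Module ℝ E] [TopologicalSpace E]
    [IsTopologicalAddGroup E] [ContinuousSMul ℝ E] :
    (∃ f : E →L[ℝ] ℝ, f ≠ 0) ↔
      ∃ C : Set E, C.Nonempty ∧ C ≠ Set.univ ∧ IsOpen C ∧ Convex ℝ C := by
  constructor
  · rintro ⟨f, hf⟩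
    obtain ⟨x, hx⟩ : ∃ x, f x ≠ 0 := by
      by_contra h
      push_neg at h
      exact hf (by ext y; simpa using h y)
    refine ⟨{y | f y < 1}, ⟨0, by simp⟩, ?_, isOpen_lt f.continuous continuous_const,
      (convex_halfSpace_lt f.toLinearMap.isLinear 1 : _)⟩
    intro h
    have : (f x)⁻¹ • x ∈ ({y | f y < 1} : Set E) := h ▸ Set.mem_univ _
    simp [Set.mem_setOf_eq, inv_mul_cancel₀ hx] at this
  · rintro ⟨C, ⟨a, ha⟩, hC, hO, hconv⟩
    obtain ⟨x, hx⟩ : ∃ x, x ∉ C := by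
      by_contra h
      push_neg at h
      exact hC (Set.eq_univ_of_forall h)
    obtain ⟨f, hf⟩ := geometric_hahn_banach_open_point hconv hO hx
    exact ⟨f, fun h => absurd (hf a ha) (by simp [h])⟩
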